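/- The abelianization of the Fibonacci group F(2,n) is finite for every n ≥ 2, with order |f(n)| where f(n) can be expressed via Fibonacci-type recurrences; in particular the abelianization of F(2,9) is finite. -/

import Mathlib

/-- Relations of the Fibonacci group F(2,n): aᵢ a_{i+1} = a_{i+2}, indices mod n. -/
def fibRels (n : ℕ) [NeZero n] : Set (FreeGroup (Fin n)) :=
  {r | ∃ i : Fin n, r = FreeGroup.of i * FreeGroup.of (i + 1) * (FreeGroup.of (i + 2))⁻¹}

/-- The Fibonacci group F(2,n). -/
abbrev Fib (n : ℕ) [NeZero n] := PresentedGroup (fibRels n)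



lemma cassini : ∀ k : ℕ, (Nat.fib k : ℤ) * Nat.fib (k+2) - (Nat.fib (k+1))^2 = (-1)^(k+1) := by
  intro k
  induction k with
  | zero => simp
  | succ m ih =>
    have h3 : (Nat.fib (m+3) : ℤ) = Nat.fib (m+1) + Nat.fib (m+2) := by
      rw [show m+3 = (m+1)+2 from rfl, Nat.fib_add_two]; push_cast; ring
    have h2 : (Nat.fib (m+2) : ℤ) = Nat.fib m + Nat.fib (m+1) := by
      rw [Nat.fib_add_two]; push_cast; ring
    rw [show m+1+2 = m+3 from rfl, show m+1+1 = m+2 from rfl, h3,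
      show ((-1:ℤ))^(m+2) = (-1)^(m+1) * (-1) from pow_succ _ _]
    rw [h2] at ih ⊢
    linear_combination (-1) * ih

lemma fib_rel_abel (n : ℕ) [NeZero n] (i : Fin n) :
    (Abelianization.of (PresentedGroup.of (rels := fibRels n) i)) *
      Abelianization.of (PresentedGroup.of (i + 1)) =
      Abelianization.of (PresentedGroup.of (i + 2)) := by
  have h : (PresentedGroup.of (rels := fibRels n) i) * PresentedGroup.of (i + 1) *
      (PresentedGroup.of (i + 2))⁻¹ = 1 := by
    have : (FreeGroup.of i * FreeGroup.of (i + 1) * (FreeGroup.of (i + 2))⁻¹) ∈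
        Subgroup.normalClosure (fibRels n) :=
      Subgroup.subset_normalClosure ⟨i, rfl⟩
    exact (QuotientGroup.eq_one_iff _).mpr this
  have h2 := congrArg Abelianization.of h
  simp only [map_mul, map_inv, map_one] at h2
  exact mul_inv_eq_one.mp h2

open Fin.CommRing in
set_option maxHeartbeats 1600000 in
/-- The abelianization of F(2,n) is finite for every n ≥ 2; in particular the
abelianization of F(2,9) is finite. -/
theorem fib_abelianization_finite :
    (∀ (n : ℕ) [NeZero n], 2 ≤ n → Finite (Abelianization (Fib n))) ∧
      Finite (Abelianization (Fib 9)) := by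
  have main : ∀ (n : ℕ) [NeZero n], 2 ≤ n → Finite (Abelianization (Fib n)) := by
    intro n _ hn
    set A := Abelianization (Fib n)
    set x : Fin n → A := fun i => Abelianization.of (PresentedGroup.of i) with hx
    have rel : ∀ i : Fin n, x i * x (i + 1) = x (i + 2) := fun i => fib_rel_abel n i
    -- Fibonacci expansion
    have expand : ∀ k : ℕ, ∀ i : Fin n,
        x (i + ((k : Fin n) + 1)) = x i ^ Nat.fib k * x (i + 1) ^ Nat.fib (k + 1) := by
      intro k
      induction k using Nat.twoStepInduction with
      | zero => intro i; simp
      | one =>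
        intro i
        have h := rel i
        simp only [Nat.fib_one, Nat.fib_two, pow_one, Nat.cast_one]
        rw [show i + ((1 : Fin n) + 1) = i + 2 by ring, ← h,
          show Nat.fib (1 + 1) = 1 from rfl, pow_one]
      | more k ih1 ih2 =>
        intro i
        have hcast : (((k+2 : ℕ) : Fin n) + 1) = ((k : Fin n) + 1) + 2 := by
          push_cast; ring
        have hcast2 : i + (((k+1 : ℕ) : Fin n) + 1) = (i + ((k : Fin n) + 1)) + 1 := by
          push_cast; ring
        have f2 : Nat.fib (k+2) = Nat.fib k + Nat.fib (k+1) := Nat.fib_add_two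
        have f3 : Nat.fib (k+3) = Nat.fib (k+1) + Nat.fib (k+2) := Nat.fib_add_two
        rw [hcast, ← add_assoc, ← rel (i + ((k : Fin n) + 1)), ih1 i, ← hcast2, ih2 i]
        simp only [show k+1+1 = k+2 from rfl, show k+2+1 = k+3 from rfl, f3, f2, pow_add]
        simp only [mul_assoc, mul_comm, mul_left_comm]
    -- each generator has finite order
    have tors : ∀ i : Fin n, IsOfFinOrder (x i) := by
      intro i
      obtain ⟨m, rfl⟩ : ∃ m, n = m + 2 := ⟨n - 2, by omega⟩
      have e1 : x i = x i ^ Nat.fib (m + 1) * x (i + 1) ^ Nat.fib (m + 2) := by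
        have h := expand (m + 1) i
        have hz : (((m+1:ℕ) : Fin (m+2)) + 1) = 0 := by
          have h0 : (((m+2:ℕ)) : Fin (m+2)) = 0 := Fin.natCast_self _
          calc ((m+1:ℕ) : Fin (m+2)) + 1 = ((m+2:ℕ) : Fin (m+2)) := by push_cast; ring
            _ = 0 := h0
        rwa [hz, add_zero] at h
      have e2 : x (i + 1) = x i ^ Nat.fib (m + 2) * x (i + 1) ^ Nat.fib (m + 3) := by
        have h := expand (m + 2) i
        rwa [Fin.natCast_self, zero_add, show m + 2 + 1 = m + 3 from rfl] at h
      set a : ℤ := (Nat.fib (m + 1) : ℤ) with ha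
      set b : ℤ := (Nat.fib (m + 2) : ℤ) with hb
      set c : ℤ := (Nat.fib (m + 3) : ℤ) with hc0
      set u : Additive A := Additive.ofMul (x i) with hu
      set v : Additive A := Additive.ofMul (x (i + 1)) with hv
      have ae1 : u = a • u + b • v := by
        have := congrArg Additive.ofMul e1
        simpa [ofMul_mul, ofMul_pow, ha, hb, natCast_zsmul] using this
      have ae2 : v = b • u + c • v := by
        have := congrArg Additive.ofMul e2
        simpa [ofMul_mul, ofMul_pow, hb, hc0, natCast_zsmul] using this
      have E1 : (a - 1) • u + b • v = 0 := by
        have h : a • u + b • v = u := ae1.symm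
        calc (a - 1) • u + b • v = (a • u + b • v) - u := by rw [sub_smul, one_smul]; abel
          _ = 0 := by rw [h]; abel
      have E2 : b • u + (c - 1) • v = 0 := by
        have h : b • u + c • v = v := ae2.symm
        calc b • u + (c - 1) • v = (b • u + c • v) - v := by rw [sub_smul, one_smul]; abel
          _ = 0 := by rw [h]; abel
      set d : ℤ := (a - 1) * (c - 1) - b * b with hd
      have hud : d • u = 0 := by
        have h : d • u = (c - 1) • ((a - 1) • u + b • v) - b • (b • u + (c - 1) • v) := by
          rw [hd]; module
        rw [h, E1, E2, smul_zero, smul_zero, sub_zero]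
      have hxd : x i ^ d = 1 := by
        apply Additive.ofMul.injective
        rw [ofMul_zpow]
        exact hud
      have hdne : d ≠ 0 := by
        have hcas := cassini (m + 1)
        have h1 : (1 : ℤ) ≤ a := by
          rw [ha]; exact_mod_cast Nat.fib_pos.mpr (Nat.succ_pos m)
        have h2 : (2 : ℤ) ≤ c := by
          rw [hc0]
          have : 2 ≤ Nat.fib (m + 3) := by
            calc 2 = Nat.fib 3 := rfl
              _ ≤ Nat.fib (m + 3) := Nat.fib_mono (by omega)
          exact_mod_cast this
        have hcas' : a * c - b ^ 2 = (-1) ^ (m + 2) := by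
          rw [ha, hb, hc0]
          simpa [show m + 1 + 2 = m + 3 from rfl, show m + 1 + 1 = m + 2 from rfl] using hcas
        intro h0
        rw [hd] at h0
        have key : a + c = 1 + (-1 : ℤ) ^ (m + 2) := by linear_combination hcas' - h0
        have hpm : ((-1 : ℤ)) ^ (m + 2) ≤ 1 := by
          rcases Nat.even_or_odd (m + 2) with h | h
          · rw [h.neg_one_pow]
          · rw [h.neg_one_pow]; norm_num
        linarith
      rw [isOfFinOrder_iff_pow_eq_one]
      refine ⟨d.natAbs, Int.natAbs_pos.mpr hdne, ?_⟩
      rcases Int.natAbs_eq d with h | h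
      · rw [← zpow_natCast, ← h, hxd]
      · rw [← zpow_natCast, ← neg_neg ((d.natAbs : ℤ)), ← h, zpow_neg, hxd, inv_one]
    -- closure of generators is everything
    have hclosure : Subgroup.closure (Set.range x) = ⊤ := by
      have hsurj : Function.Surjective (Abelianization.of : Fib n → A) := fun b =>
        QuotientGroup.induction_on b fun z => ⟨z, rfl⟩
      have hr : Set.range x = ⇑Abelianization.of '' Set.range (PresentedGroup.of (rels := fibRels n)) := by
        rw [← Set.range_comp]; rfl
      rw [hr, ← MonoidHom.map_closure, PresentedGroup.closure_range_of,
        ← MonoidHom.range_eq_map, MonoidHom.range_eq_top]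
      exact hsurj
    have hfg : Group.FG A := Group.fg_iff.mpr ⟨Set.range x, hclosure, Set.finite_range x⟩
    have htors : Monoid.IsTorsion A := by
      intro g
      have hg : g ∈ CommGroup.torsion A := by
        have hle : Subgroup.closure (Set.range x) ≤ CommGroup.torsion A :=
          Subgroup.closure_le _ |>.mpr (by rintro _ ⟨i, rfl⟩; exact tors i)
        exact hle (hclosure ▸ Subgroup.mem_top g)
      exact hg
    exact CommGroup.finite_of_fg_torsion A htors
  exact ⟨main, main 9 (by norm_num)⟩
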